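/- Let K₁ > 0 and K₂ be real constants with |K₂| < K₁, let z₀ = log(K₂/K₁ + 1), and let v, w : ℝ → ℝ be differentiable functions satisfying v̇(t) = −e^{z₀}(e^{v(t)} − 1) − w(t) and ẇ(t) = (K₁ + K₂)(e^{v(t)} − 1) for all t. Then the function t ↦ V(v(t), w(t)), where V(v, w) = e^v − v − 1 + w²/(2(K₁ + K₂)), is differentiable with derivative equal to −e^{z₀}(e^{v(t)} − 1)² ≤ 0 for all t. -/

import Mathlib

/-- Along solutions of the shifted network-level dynamics, the Lyapunov
function `V(v,w) = e^v - v - 1 + w²/(2(K₁+K₂))` has derivative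
`-e^{z₀}(e^{v(t)} - 1)² ≤ 0`. -/
theorem lyapunov_derivative_nonpos (K₁ K₂ : ℝ) (hK₁ : 0 < K₁) (hK₂ : |K₂| < K₁)
    (z₀ : ℝ) (hz₀ : z₀ = Real.log (K₂ / K₁ + 1))
    (v w : ℝ → ℝ)
    (hv : ∀ t, HasDerivAt v (-Real.exp z₀ * (Real.exp (v t) - 1) - w t) t)
    (hw : ∀ t, HasDerivAt w ((K₁ + K₂) * (Real.exp (v t) - 1)) t) :
    ∀ t, HasDerivAt
        (fun s => Real.exp (v s) - v s - 1 + (w s) ^ 2 / (2 * (K₁ + K₂)))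
        (-Real.exp z₀ * (Real.exp (v t) - 1) ^ 2) t ∧
      -Real.exp z₀ * (Real.exp (v t) - 1) ^ 2 ≤ 0 := by
  have hKpos : (0 : ℝ) < K₁ + K₂ := by
    have := neg_lt_of_abs_lt hK₂
    linarith
  intro t
  constructor
  · set v' := -Real.exp z₀ * (Real.exp (v t) - 1) - w t with hv'
    have h1 : HasDerivAt (fun s => Real.exp (v s)) (Real.exp (v t) * v') t :=
      (Real.hasDerivAt_exp (v t)).comp t (hv t)
    have h2 : HasDerivAt (fun s => (w s) ^ 2 / (2 * (K₁ + K₂)))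
        ((2 * w t * ((K₁ + K₂) * (Real.exp (v t) - 1))) / (2 * (K₁ + K₂))) t := by
      have := ((hw t).pow 2).div_const (2 * (K₁ + K₂))
      simpa [mul_comm, mul_assoc, mul_left_comm] using this
    have := ((h1.sub (hv t)).sub_const 1).add h2
    convert this using 1
    · rfl
    · rfl
    · rfl
    · field_simp
      ring
  · have h1 : (0:ℝ) ≤ Real.exp z₀ * (Real.exp (v t) - 1) ^ 2 :=
      mul_nonneg (Real.exp_pos z₀).le (sq_nonneg _)
    linarith
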